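/- Let Q be a finite graded poset of rank r (every maximal chain has length r). Then the rowmotion orbit of the empty order ideal of Q has cardinality exactly r + 2, where rowmotion ψ sends an order ideal I to the order ideal generated by the minimal elements of Q \ I. -/

import Mathlib

/-- Rowmotion: `ψ(I)` is the order ideal generated by the minimal elements of the
complement of `I`. -/
def rowmotion {Q : Type*} [PartialOrder Q] (I : Set Q) : Set Q :=
  {x | ∃ m, m ∉ I ∧ (∀ y, y < m → y ∈ I) ∧ x ≤ m}

section Aux

variable {Q : Type*} [PartialOrder Q] [Fintype Q]

lemma Finset.exists_minimal_old {α : Type*} [PartialOrder α] (s : Finset α) (h : s.Nonempty) :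
    ∃ m ∈ s, ∀ x ∈ s, ¬ x < m := by
  obtain ⟨m, hm⟩ := Finset.exists_minimal h
  exact ⟨m, hm.1, fun x hx hlt => lt_irrefl _ (hlt.trans_le (hm.2 hx hlt.le))⟩

lemma Finset.exists_maximal_old {α : Type*} [PartialOrder α] (s : Finset α) (h : s.Nonempty) :
    ∃ m ∈ s, ∀ x ∈ s, ¬ m < x := by
  obtain ⟨m, hm⟩ := Finset.exists_maximal h
  exact ⟨m, hm.1, fun x hx hlt => lt_irrefl _ (hlt.trans_le (hm.2 hx hlt.le))⟩

lemma aux_exists_covby_above {x : Q} (h : ∃ y, x < y) : ∃ y, x ⋖ y := by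
  classical
  obtain ⟨y0, hy0⟩ := h
  obtain ⟨m, hm, hmin⟩ := Finset.exists_minimal_old (Finset.univ.filter (fun z => x < z))
    ⟨y0, by simp [hy0]⟩
  simp only [Finset.mem_filter, Finset.mem_univ, true_and] at hm hmin
  exact ⟨m, hm, fun c hc hcm => hmin c (by simpa using hc) hcm⟩

lemma aux_exists_covby_below {x : Q} (h : ∃ y, y < x) : ∃ y, y ⋖ x := by
  classical
  obtain ⟨y0, hy0⟩ := h
  obtain ⟨m, hm, hmax⟩ := Finset.exists_maximal_old (Finset.univ.filter (fun z => z < x))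
    ⟨y0, by simp [hy0]⟩
  simp only [Finset.mem_filter, Finset.mem_univ, true_and] at hm hmax
  exact ⟨m, hm, fun c hc hcm => hmax c (by simpa using hcm) hc⟩

lemma aux_exists_ge_covby {y x : Q} (h : y < x) : ∃ z, y ≤ z ∧ z ⋖ x := by
  classical
  obtain ⟨m, hm, hmax⟩ := Finset.exists_maximal_old (Finset.univ.filter (fun z => y ≤ z ∧ z < x))
    ⟨y, by simp [h]⟩
  simp only [Finset.mem_filter, Finset.mem_univ, true_and] at hm hmax
  refine ⟨m, hm.1, hm.2, fun c hc hcx => ?_⟩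
  exact hmax c (by simp [hm.1.trans hc.le, hcx]) hc

lemma aux_exists_maximal_ge (x : Q) : ∃ m, x ≤ m ∧ ∀ y, ¬ m < y := by
  classical
  obtain ⟨m, hm, hmax⟩ := Finset.exists_maximal_old (Finset.univ.filter (fun z => x ≤ z))
    ⟨x, by simp⟩
  simp only [Finset.mem_filter, Finset.mem_univ, true_and] at hm hmax
  exact ⟨m, hm, fun y hy => hmax y (by simp [hm.trans hy.le]) hy⟩

lemma aux_exists_minimal [Nonempty Q] : ∃ m : Q, ∀ y, ¬ y < m := by
  classical
  obtain ⟨m, _, hmin⟩ := Finset.exists_minimal_old (Finset.univ : Finset Q)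
    Finset.univ_nonempty
  exact ⟨m, fun y hy => hmin y (Finset.mem_univ y) hy⟩

variable (rk : Q → ℕ)

lemma aux_rk_strictMono (hcov : ∀ x y : Q, x ⋖ y → rk y = rk x + 1) :
    ∀ x : Q, ∀ y, y < x → rk y < rk x := by
  intro x
  induction x using WellFoundedLT.induction with
  | _ x ih =>
    intro y hyx
    obtain ⟨z, hyz, hzx⟩ := aux_exists_ge_covby hyx
    rcases eq_or_lt_of_le hyz with rfl | hlt
    · rw [hcov _ x hzx]; omega
    · have h1 := ih z hzx.lt y hlt
      rw [hcov z x hzx]; omega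

variable (r : ℕ)

lemma aux_rk_le (hcov : ∀ x y : Q, x ⋖ y → rk y = rk x + 1)
    (hmax : ∀ x : Q, (∀ y, ¬ x < y) → rk x = r) (x : Q) : rk x ≤ r := by
  obtain ⟨m, hxm, hm⟩ := aux_exists_maximal_ge x
  rcases eq_or_lt_of_le hxm with rfl | hlt
  · exact (hmax x hm).le
  · have := aux_rk_strictMono rk hcov m x hlt
    rw [hmax m hm] at this; omega

lemma aux_exists_above (hcov : ∀ x y : Q, x ⋖ y → rk y = rk x + 1)
    (hmax : ∀ x : Q, (∀ y, ¬ x < y) → rk x = r) :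
    ∀ n : ℕ, ∀ k ≤ r, ∀ x : Q, k - rk x = n → rk x ≤ k → ∃ m, x ≤ m ∧ rk m = k := by
  intro n
  induction n with
  | zero =>
    intro k hk x hn hx
    exact ⟨x, le_refl x, by omega⟩
  | succ n ih =>
    intro k hk x hn hx
    have hxk : rk x < k := by omega
    have hnm : ¬ (∀ y, ¬ x < y) := by
      intro h
      have := hmax x h
      omega
    push_neg at hnm
    obtain ⟨y, hy⟩ := aux_exists_covby_above hnm
    have hry : rk y = rk x + 1 := hcov x y hy
    obtain ⟨m, hym, hm⟩ := ih k hk y (by omega) (by omega)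
    exact ⟨m, hy.le.trans hym, hm⟩

end Aux

/-- For a finite graded poset `Q` of rank `r`, the rowmotion orbit of the empty
order ideal has cardinality exactly `r + 2`. -/
theorem rowmotion_orbit_empty_card {Q : Type*} [PartialOrder Q] [Fintype Q] [Nonempty Q]
    (r : ℕ) (rk : Q → ℕ)
    (hmin : ∀ x : Q, (∀ y, ¬ y < x) → rk x = 0)
    (hcov : ∀ x y : Q, x ⋖ y → rk y = rk x + 1)
    (hmax : ∀ x : Q, (∀ y, ¬ x < y) → rk x = r) :
    Set.ncard {I | ∃ k : ℕ, rowmotion^[k] (∅ : Set Q) = I} = r + 2 := by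
  classical
  set f : ℕ → Set Q := fun k => {x | rk x < k} with hf
  have hrkle : ∀ x : Q, rk x ≤ r := aux_rk_le rk r hcov hmax
  have hmono := aux_rk_strictMono rk hcov
  have habove : ∀ k ≤ r, ∀ x : Q, rk x ≤ k → ∃ m, x ≤ m ∧ rk m = k := by
    intro k hk x hx
    exact aux_exists_above rk r hcov hmax (k - rk x) k hk x rfl hx
  -- for each k ≤ r there is an element of rank k
  have hsurj : ∀ k ≤ r, ∃ m : Q, rk m = k := by
    intro k hk
    obtain ⟨m0, hm0⟩ := aux_exists_minimal (Q := Q)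
    obtain ⟨m, _, hm⟩ := habove k hk m0 (by rw [hmin m0 hm0]; omega)
    exact ⟨m, hm⟩
  -- the key rowmotion step
  have hstep : ∀ k ≤ r, rowmotion (f k) = f (k + 1) := by
    intro k hk
    ext x
    constructor
    · rintro ⟨m, hmI, hmin', hxm⟩
      simp only [hf, Set.mem_setOf_eq, not_lt] at hmI ⊢
      -- show rk m = k
      have hrm : rk m ≤ k := by
        by_contra hgt
        push_neg at hgt
        have hne : ¬ (∀ y, ¬ y < m) := by
          intro h
          have := hmin m h
          omega
        push_neg at hne
        obtain ⟨y, hy⟩ := aux_exists_covby_below hne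
        have h1 : rk m = rk y + 1 := hcov y m hy
        have h2 : rk y < k := hmin' y hy.lt
        omega
      rcases eq_or_lt_of_le hxm with rfl | hlt
      · omega
      · have := hmono m x hlt
        omega
    · intro hx
      simp only [hf, Set.mem_setOf_eq] at hx
      obtain ⟨m, hxm, hm⟩ := habove k hk x (by omega)
      exact ⟨m, by simp [hf, hm], fun y hy => by
        have := hmono m y hy
        simp only [hf, Set.mem_setOf_eq]; omega, hxm⟩
  have htop : rowmotion (f (r + 1)) = ∅ := by
    ext x
    simp only [rowmotion, hf, Set.mem_setOf_eq, Set.mem_empty_iff_false, iff_false]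
    rintro ⟨m, hmI, -, -⟩
    exact hmI (by have := hrkle m; omega)
  have hf0 : f 0 = ∅ := by
    ext x; simp [hf]
  -- iteration up to r+1
  have hiter : ∀ k ≤ r + 1, rowmotion^[k] (∅ : Set Q) = f k := by
    intro k
    induction k with
    | zero => intro _; simpa using hf0.symm
    | succ k ih =>
      intro hk
      rw [Function.iterate_succ_apply', ih (by omega), hstep k (by omega)]
  -- general iteration
  have hmod : ∀ k : ℕ, rowmotion^[k] (∅ : Set Q) = f (k % (r + 2)) := by
    intro k
    induction k with
    | zero => simpa using hf0.symm
    | succ k ih =>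
      rw [Function.iterate_succ_apply', ih]
      have hlt : k % (r + 2) < r + 2 := Nat.mod_lt _ (by omega)
      have h1 : (1 : ℕ) % (r + 2) = 1 := Nat.mod_eq_of_lt (by omega)
      rcases eq_or_lt_of_le (Nat.lt_succ_iff.mp hlt) with heq | hlt'
      · -- k % (r+2) = r+1
        rw [heq, htop]
        have h2 : (k + 1) % (r + 2) = 0 := by
          rw [Nat.add_mod, h1, heq]
          exact Nat.mod_self _
        rw [h2, hf0]
      · -- k % (r+2) ≤ r
        have hk' : k % (r + 2) ≤ r := by omega
        rw [hstep _ hk']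
        have h2 : (k + 1) % (r + 2) = k % (r + 2) + 1 := by
          rw [Nat.add_mod, h1, Nat.mod_eq_of_lt (by omega)]
        rw [h2]
  -- orbit is the image of f on Iio (r+2)
  have horbit : {I | ∃ k : ℕ, rowmotion^[k] (∅ : Set Q) = I} = f '' Set.Iio (r + 2) := by
    ext I
    constructor
    · rintro ⟨k, rfl⟩
      exact ⟨k % (r + 2), Nat.mod_lt _ (by omega), (hmod k).symm⟩
    · rintro ⟨j, hj, rfl⟩
      simp only [Set.mem_Iio] at hj
      exact ⟨j, hiter j (by omega)⟩
  have hne : ∀ j k : ℕ, j < k → k < r + 2 → f j ≠ f k := by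
    intro j k hjk hk h
    obtain ⟨m, hm⟩ := hsurj j (by omega)
    have h2 : m ∈ f k := by simp only [hf, Set.mem_setOf_eq, hm]; omega
    rw [← h] at h2
    simp only [hf, Set.mem_setOf_eq, hm] at h2
    omega
  have hinj : Set.InjOn f (Set.Iio (r + 2)) := by
    intro j hj k hk h
    simp only [Set.mem_Iio] at hj hk
    rcases lt_trichotomy j k with h1 | h1 | h1
    · exact absurd h (hne j k h1 hk)
    · exact h1
    · exact absurd h.symm (hne k j h1 hj)
  rw [horbit, Set.ncard_image_of_injOn hinj, ← Finset.coe_range,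
    Set.ncard_coe_finset, Finset.card_range]
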